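/- Let d = (d_1,...,d_n) be a non-increasing sequence of positive integers with d_1 ≥ 2 and ∑ d_i = 2n - 2c for a positive integer c. If n_1(d) > n_{≥2}(d) and c - 1 < ⌈(n_1(d) - n_{≥2}(d))/2⌉, then the maximum of the domination number over all forests with degree sequence d equals n - n_1(d) + c - 1. -/

import Mathlib

open SimpleGraph Finset

/-- The degree of a vertex `v` in a simple graph `G`. -/
noncomputable def deg {V : Type*} [Fintype V] (G : SimpleGraph V) (v : V) : ℕ :=
  Nat.card {u // G.Adj v u}

/-- The degree sequence of `G` as a multiset. -/
noncomputable def degSeq {V : Type*} [Fintype V] (G : SimpleGraph V) : Multiset ℕ :=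
  Finset.univ.val.map (deg G)

/-- `D` is a dominating set of `G`. -/
def IsDomSet {V : Type*} (G : SimpleGraph V) (D : Set V) : Prop :=
  ∀ v ∉ D, ∃ u ∈ D, G.Adj u v

/-- The domination number of `G`. -/
noncomputable def domNum {V : Type*} [Fintype V] (G : SimpleGraph V) : ℕ :=
  sInf {k | ∃ D : Set V, IsDomSet G D ∧ D.ncard = k}

/-- `I` is an independent set of `G`. -/
def IsIndepSet' {V : Type*} (G : SimpleGraph V) (I : Set V) : Prop :=
  ∀ u ∈ I, ∀ v ∈ I, ¬ G.Adj u v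

/-- The independence number of `G`. -/
noncomputable def indepNum {V : Type*} [Fintype V] (G : SimpleGraph V) : ℕ :=
  sSup {k | ∃ I : Set V, IsIndepSet' G I ∧ I.ncard = k}

/-- `v` is a support vertex of `G`: degree at least 2 with a neighbor of degree 1. -/
noncomputable def IsSupport {V : Type*} [Fintype V] (G : SimpleGraph V) (v : V) : Prop :=
  2 ≤ deg G v ∧ ∃ u, G.Adj v u ∧ deg G u = 1

set_option linter.unusedSectionVars false
set_option linter.unusedVariables false


section Helpers

variable {V : Type*}

lemma card_filter_val (n : ℕ) (P : ℕ → Prop) [DecidablePred P] :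
    #(Finset.univ.filter (fun a : Fin n => P ↑a)) = #((Finset.range n).filter P) := by
  rw [Finset.card_filter, Finset.card_filter]
  exact Fin.sum_univ_eq_sum_range (fun i => if P i then 1 else 0) n

lemma deg_eq_card_filter [Fintype V] (G : SimpleGraph V) [DecidableRel G.Adj] (v : V) :
    deg G v = #(Finset.univ.filter (fun u => G.Adj v u)) := by
  simp [deg, Nat.card_eq_fintype_card, Fintype.card_subtype]

/-- In a path starting at `u`, any edge containing `u` goes to the second vertex. -/
lemma first_edge {G : SimpleGraph V} {u v w : V} {p : G.Walk u v} (hp : p.IsPath)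
    (he : s(u, w) ∈ p.edges) : w = p.getVert 1 := by
  cases p with
  | nil => simp at he
  | cons h q =>
    rw [SimpleGraph.Walk.edges_cons, List.mem_cons] at he
    rcases he with he | he
    · rw [Sym2.eq_iff] at he
      rcases he with ⟨-, rfl⟩ | ⟨h1, rfl⟩
      · simp only [SimpleGraph.Walk.getVert_cons_succ, SimpleGraph.Walk.getVert_zero]
      · exact absurd h1 h.ne
    · exact absurd (SimpleGraph.Walk.fst_mem_support_of_mem_edges q he)
        ((SimpleGraph.Walk.cons_isPath_iff h q).mp hp).2

lemma getVert_mem_support {G : SimpleGraph V} {u v : V} (p : G.Walk u v) (i : ℕ) :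
    p.getVert i ∈ p.support := by
  induction p generalizing i with
  | nil => simp [SimpleGraph.Walk.getVert]
  | cons h q ih =>
    cases i with
    | zero => simp [SimpleGraph.Walk.getVert_zero]
    | succ i =>
      rw [SimpleGraph.Walk.getVert_cons_succ]
      simp [ih i]

lemma getVert_injOn {G : SimpleGraph V} {u v : V} (p : G.Walk u v) (h : p.support.Nodup) :
    ∀ i j, i < j → j ≤ p.length → p.getVert i ≠ p.getVert j := by
  induction p with
  | nil => intro i j hij hj; simp [SimpleGraph.Walk.length_nil] at hj; omega
  | cons hadj q ih =>
    intro i j hij hj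
    rw [SimpleGraph.Walk.support_cons, List.nodup_cons] at h
    cases i with
    | zero =>
      rw [SimpleGraph.Walk.getVert_zero, SimpleGraph.Walk.getVert_cons q hadj (by omega)]
      intro hcon
      exact h.1 (hcon ▸ getVert_mem_support q (j - 1))
    | succ i =>
      cases j with
      | zero => omega
      | succ j =>
        rw [SimpleGraph.Walk.getVert_cons_succ, SimpleGraph.Walk.getVert_cons_succ]
        exact ih h.2 i j (by omega) (by simpa [SimpleGraph.Walk.length_cons] using hj)

/-- A graph in which every vertex has at most one smaller neighbor is acyclic. -/
lemma acyclic_of_unique_smaller [Fintype V] [LinearOrder V] {G : SimpleGraph V}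
    (h : ∀ v u w : V, G.Adj v u → G.Adj v w → u < v → w < v → u = w) : G.IsAcyclic := by
  classical
  intro v0 c0 hc0
  -- let v be the maximum vertex on the cycle
  have hne : c0.support.toFinset.Nonempty :=
    ⟨v0, List.mem_toFinset.mpr c0.start_mem_support⟩
  set v := c0.support.toFinset.max' hne with hv
  have hvmem : v ∈ c0.support := List.mem_toFinset.mp (c0.support.toFinset.max'_mem hne)
  have hmax0 : ∀ x ∈ c0.support, x ≤ v := fun x hx =>
    c0.support.toFinset.le_max' x (List.mem_toFinset.mpr hx)
  set c := c0.rotate v hvmem with hcdef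
  have hc : c.IsCycle := hc0.rotate hvmem
  have hmax : ∀ x ∈ c.support, x ≤ v := by
    intro x hx
    rw [SimpleGraph.Walk.support_eq_cons] at hx
    rcases List.mem_cons.mp hx with rfl | hx
    · rfl
    · have : x ∈ c0.support.tail :=
        (SimpleGraph.Walk.support_rotate c0 v hvmem).mem_iff.mp hx
      exact hmax0 x (by rw [SimpleGraph.Walk.support_eq_cons c0]; exact List.mem_cons_of_mem _ this)
  clear_value c
  cases c with
  | nil => exact hc.ne_nil rfl
  | cons hadj q =>
    rw [SimpleGraph.Walk.cons_isCycle_iff] at hc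
    have h3 : 3 ≤ q.length + 1 := by
      have := (hc0.rotate hvmem).three_le_length
      rw [← hcdef] at this
      simpa using this
    have hL : 2 ≤ q.length := by omega
    set a := q.getVert 0 with ha
    set b := q.getVert (q.length - 1) with hb
    have hadj2 : G.Adj b v := by
      have := q.adj_getVert_succ (i := q.length - 1) (by omega)
      have heq : q.length - 1 + 1 = q.length := by omega
      rw [heq, SimpleGraph.Walk.getVert_length] at this
      exact this
    have hab : a ≠ b := getVert_injOn q hc.1.support_nodup 0 (q.length - 1) (by omega) (by omega)
    have hamem : a ∈ SimpleGraph.Walk.support (SimpleGraph.Walk.cons hadj q) := by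
      rw [SimpleGraph.Walk.support_cons]
      exact List.mem_cons_of_mem _ (by rw [ha, SimpleGraph.Walk.getVert_zero]; exact q.start_mem_support)
    have hbmem : b ∈ SimpleGraph.Walk.support (SimpleGraph.Walk.cons hadj q) := by
      rw [SimpleGraph.Walk.support_cons]
      exact List.mem_cons_of_mem _ (getVert_mem_support q _)
    have hadj1 : G.Adj v a := by rw [ha, SimpleGraph.Walk.getVert_zero]; exact hadj
    have halt : a < v := lt_of_le_of_ne (hmax a hamem) hadj1.ne'
    have hblt : b < v := lt_of_le_of_ne (hmax b hbmem) hadj2.ne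
    exact hab (h v a b hadj1 hadj2.symm halt hblt)

end Helpers

section Forest

variable {V : Type*} [Fintype V] [DecidableEq V] {G : SimpleGraph V} [DecidableRel G.Adj]

lemma grow (hG : G.IsAcyclic) (S : Finset V)
    (hS : ∀ s ∈ S, 2 ≤ #(S.filter (fun u => G.Adj s u))) {s0 : V} (hs0 : s0 ∈ S) :
    ∀ k : ℕ, ∃ (u v : V) (p : G.Walk u v), p.IsPath ∧ (∀ x ∈ p.support, x ∈ S) ∧ p.length = k := by
  intro k
  induction k with
  | zero => exact ⟨s0, s0, SimpleGraph.Walk.nil, by simp, by simpa using hs0, rfl⟩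
  | succ k ih =>
    obtain ⟨u, v, p, hp, hsub, hlen⟩ := ih
    have hu : u ∈ S := hsub u p.start_mem_support
    obtain ⟨w, hwmem, hwne⟩ := Finset.exists_mem_ne (by have := hS u hu; omega : 1 < #(S.filter (fun x => G.Adj u x))) (p.getVert 1)
    rw [Finset.mem_filter] at hwmem
    obtain ⟨hwS, hadj⟩ := hwmem
    by_cases hws : w ∈ p.support
    · exfalso
      have hcyc : (SimpleGraph.Walk.cons hadj ((p.takeUntil w hws).reverse)).IsCycle := by
        rw [SimpleGraph.Walk.cons_isCycle_iff]
        refine ⟨(hp.takeUntil hws).reverse, fun hmem => ?_⟩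
        rw [SimpleGraph.Walk.edges_reverse, List.mem_reverse] at hmem
        exact hwne (first_edge hp (SimpleGraph.Walk.edges_takeUntil_subset p hws hmem))
      exact hG _ hcyc
    · refine ⟨w, v, SimpleGraph.Walk.cons hadj.symm p, ?_, ?_, ?_⟩
      · rw [SimpleGraph.Walk.cons_isPath_iff]; exact ⟨hp, hws⟩
      · intro x hx
        rw [SimpleGraph.Walk.support_cons, List.mem_cons] at hx
        rcases hx with rfl | hx
        · exact hwS
        · exact hsub x hx
      · simp [SimpleGraph.Walk.length_cons, hlen]

lemma exists_low_deg (hG : G.IsAcyclic) (S : Finset V) (hne : S.Nonempty) :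
    ∃ s ∈ S, #(S.filter (fun u => G.Adj s u)) ≤ 1 := by
  by_contra hcon
  push_neg at hcon
  obtain ⟨s0, hs0⟩ := hne
  obtain ⟨u, v, p, hp, hsub, hlen⟩ := grow hG S (fun s hs => hcon s hs) hs0 #S
  have h1 : p.support.length = #S + 1 := by rw [SimpleGraph.Walk.length_support, hlen]
  have h2 : p.support.toFinset.card = #S + 1 := by
    rw [List.toFinset_card_of_nodup hp.support_nodup, h1]
  have h3 : p.support.toFinset ⊆ S := fun x hx => hsub x (List.mem_toFinset.mp hx)
  have := Finset.card_le_card h3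
  omega

/-- In an acyclic graph, the sum over a nonempty set `S` of the number of neighbors
within `S` is at most `2 * #S - 2`. -/
lemma forest_bound (hG : G.IsAcyclic) (S : Finset V) (hne : S.Nonempty) :
    (∑ v ∈ S, #(S.filter (fun u => G.Adj v u))) + 2 ≤ 2 * #S := by
  classical
  generalize hn : #S = N
  induction N using Nat.strong_induction_on generalizing S with
  | _ N ih =>
    obtain ⟨s, hsS, hslow⟩ := exists_low_deg hG S hne
    set S' := S.erase s with hS'
    have hcard' : #S' = #S - 1 := Finset.card_erase_of_mem hsS
    by_cases hne' : S'.Nonempty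
    · have hlt : #S' < N := by
        have : 1 ≤ #S := Finset.card_pos.mpr hne
        omega
      have IH := ih #S' hlt S' hne' rfl
      -- decompose the sum over S
      have hsum : (∑ v ∈ S, #(S.filter (fun u => G.Adj v u)))
          = #(S.filter (fun u => G.Adj s u)) + ∑ v ∈ S', #(S.filter (fun u => G.Adj v u)) := by
        rw [hS']; exact (Finset.add_sum_erase S _ hsS).symm
      have hpoint : ∀ v ∈ S', #(S.filter (fun u => G.Adj v u))
          = #(S'.filter (fun u => G.Adj v u)) + (if G.Adj v s then 1 else 0) := by
        intro v hv
        have : S = insert s S' := by rw [hS', Finset.insert_erase hsS]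
        rw [this, Finset.filter_insert]
        split
        · rw [Finset.card_insert_of_notMem (fun hmem => (Finset.mem_erase.mp (Finset.mem_filter.mp hmem).1).1 rfl)]
        · rfl
      have hsum2 : ∑ v ∈ S', #(S.filter (fun u => G.Adj v u))
          = (∑ v ∈ S', #(S'.filter (fun u => G.Adj v u))) + #(S'.filter (fun v => G.Adj v s)) := by
        rw [Finset.sum_congr rfl hpoint, Finset.sum_add_distrib]
        congr 1
        exact (Finset.card_filter _ _).symm
      have hback : #(S'.filter (fun v => G.Adj v s)) ≤ #(S.filter (fun u => G.Adj s u)) := by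
        apply Finset.card_le_card
        intro x hx
        rw [Finset.mem_filter] at hx ⊢
        exact ⟨Finset.mem_of_mem_erase hx.1, hx.2.symm⟩
      have h1 : 1 ≤ #S := Finset.card_pos.mpr hne
      omega
    · -- S = {s}
      rw [Finset.not_nonempty_iff_eq_empty] at hne'
      have hS1 : S = {s} := by
        have := Finset.insert_erase hsS
        rw [hS'] at hne'
        rw [← this, hne']; simp
      subst hn
      rw [hS1]
      simp [Finset.filter_singleton, SimpleGraph.irrefl]

end Forest

section PartA

set_option maxHeartbeats 1000000 in
/-- Upper bound -/
lemma partA {n : ℕ} (G : SimpleGraph (Fin n)) (hac : G.IsAcyclic)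
    {m n1 c : ℕ} (hc : 1 ≤ c) (hm : 1 ≤ m) (hmn : m + n1 = n)
    (hpos : ∀ v, 1 ≤ deg G v)
    (hI : #(Finset.univ.filter (fun v => 2 ≤ deg G v)) = m)
    (hsum : (∑ v, deg G v) + 2 * c = 2 * n) :
    domNum G ≤ m + c - 1 := by
  classical
  set I : Finset (Fin n) := Finset.univ.filter (fun v => 2 ≤ deg G v) with hIdef
  set L : Finset (Fin n) := Finset.univ.filter (fun v => deg G v = 1) with hLdef
  have hdeg : ∀ v, deg G v = #(Finset.univ.filter (fun u => G.Adj v u)) :=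
    fun v => deg_eq_card_filter G v
  have hparts : ∀ v : Fin n, (v ∈ I ∧ v ∉ L) ∨ (v ∈ L ∧ v ∉ I) := by
    intro v
    have h1 := hpos v
    by_cases h : 2 ≤ deg G v
    · exact Or.inl ⟨by simp [hIdef, h], by simp [hLdef]; omega⟩
    · exact Or.inr ⟨by simp [hLdef]; omega, by simp [hIdef]; omega⟩
  have hunion : I ∪ L = Finset.univ := by
    ext v; simp only [Finset.mem_union, Finset.mem_univ, iff_true]
    rcases hparts v with ⟨h, -⟩ | ⟨h, -⟩
    · exact Or.inl h
    · exact Or.inr h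
  have hdisj : Disjoint I L := by
    rw [Finset.disjoint_left]
    intro v hv hv'
    rcases hparts v with ⟨-, h⟩ | ⟨-, h⟩ <;> [exact h hv'; exact h hv]
  have hL : #L = n1 := by
    have := Finset.card_union_of_disjoint hdisj
    rw [hunion, Finset.card_univ, Fintype.card_fin] at this
    omega
  -- the unique-neighbor function on L
  have hNex : ∀ v ∈ L, ∃ u, Finset.univ.filter (fun u => G.Adj v u) = {u} := by
    intro v hv
    apply Finset.card_eq_one.mp
    rw [← hdeg v]
    simpa [hLdef] using hv
  have hNex2 : ∀ v : Fin n, ∃ u : Fin n, v ∈ L → G.Adj v u ∧ ∀ w, G.Adj v w → w = u := by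
    intro v
    by_cases hv : v ∈ L
    · obtain ⟨u, hu⟩ := hNex v hv
      rw [Finset.eq_singleton_iff_unique_mem] at hu
      exact ⟨u, fun _ => ⟨(Finset.mem_filter.mp hu.1).2,
        fun w hw => hu.2 w (Finset.mem_filter.mpr ⟨Finset.mem_univ _, hw⟩)⟩⟩
    · exact ⟨v, fun h => absurd h hv⟩
  obtain ⟨N, hNadj0⟩ := Classical.axiomOfChoice hNex2
  have hNadj : ∀ v ∈ L, G.Adj v (N v) ∧ ∀ w, G.Adj v w → w = N v := fun v hv => hNadj0 v hv
  -- split each degree into I-neighbors and L-neighbors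
  have hsplit : ∀ v : Fin n, deg G v = #(I.filter (fun u => G.Adj v u)) + #(L.filter (fun u => G.Adj v u)) := by
    intro v
    rw [hdeg v, ← hunion, Finset.filter_union]
    apply Finset.card_union_of_disjoint
    exact Finset.disjoint_filter_filter hdisj
  -- forest bound on I
  have hIne : I.Nonempty := Finset.card_pos.mp (by omega)
  have hW := forest_bound hac I hIne
  rw [hI] at hW
  -- swap the double sum
  have hswap : ∑ v ∈ I, #(L.filter (fun u => G.Adj v u)) = ∑ u ∈ L, #(I.filter (fun w => G.Adj u w)) := by
    simp only [Finset.card_filter]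
    rw [Finset.sum_comm]
    apply Finset.sum_congr rfl
    intro u _
    apply Finset.sum_congr rfl
    intro v _
    simp [SimpleGraph.adj_comm]
  -- B : leaves whose neighbor is a leaf
  set B : Finset (Fin n) := L.filter (fun u => N u ∈ L) with hBdef
  have hLN : ∀ u ∈ L, #(L.filter (fun w => G.Adj u w)) = (if N u ∈ L then 1 else 0) := by
    intro u hu
    have h1 : L.filter (fun w => G.Adj u w) ⊆ {N u} := by
      intro w hw
      rw [Finset.mem_filter] at hw
      rw [Finset.mem_singleton]
      exact (hNadj u hu).2 w hw.2
    split
    case isTrue h =>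
      apply le_antisymm
      · simpa using Finset.card_le_card h1
      · rw [Nat.one_le_iff_ne_zero, ← Nat.pos_iff_ne_zero, Finset.card_pos]
        exact ⟨N u, Finset.mem_filter.mpr ⟨h, (hNadj u hu).1⟩⟩
    case isFalse h =>
      rw [Finset.card_eq_zero, Finset.eq_empty_iff_forall_notMem]
      intro w hw
      have := h1 hw
      rw [Finset.mem_singleton] at this
      subst this
      exact h (Finset.mem_filter.mp hw).1
  have hsumL : ∑ u ∈ L, #(L.filter (fun w => G.Adj u w)) = #B := by
    rw [Finset.sum_congr rfl hLN, hBdef, Finset.card_filter]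
  have hLdeg1 : ∀ u ∈ L, deg G u = 1 := by
    intro u hu; simpa [hLdef] using hu
  have hsumLI : (∑ u ∈ L, #(I.filter (fun w => G.Adj u w))) + #B = n1 := by
    have : ∀ u ∈ L, #(I.filter (fun w => G.Adj u w)) + #(L.filter (fun w => G.Adj u w)) = 1 := by
      intro u hu
      rw [← hsplit u, hLdeg1 u hu]
    calc (∑ u ∈ L, #(I.filter (fun w => G.Adj u w))) + #B
        = ∑ u ∈ L, (#(I.filter (fun w => G.Adj u w)) + #(L.filter (fun w => G.Adj u w))) := by
          rw [Finset.sum_add_distrib, hsumL]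
      _ = #L := by rw [Finset.sum_congr rfl this]; simp
      _ = n1 := hL
  -- total degree sum split
  have htot : (∑ v ∈ I, deg G v) + (∑ u ∈ L, deg G u) = 2 * n - 2 * c := by
    rw [← Finset.sum_union hdisj, hunion]
    omega
  have hsumLdeg : ∑ u ∈ L, deg G u = n1 := by
    rw [Finset.sum_congr rfl hLdeg1]; simp [hL]
  have hsumI : ∑ v ∈ I, deg G v
      = (∑ v ∈ I, #(I.filter (fun u => G.Adj v u))) + (∑ v ∈ I, #(L.filter (fun u => G.Adj v u))) := by
    rw [← Finset.sum_add_distrib]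
    exact Finset.sum_congr rfl (fun v _ => hsplit v)
  -- key bound on B
  have hBbound : #B + 2 ≤ 2 * c := by
    have h2n : 2 * c ≤ 2 * n := by omega
    rw [hswap] at hsumI
    omega
  -- B' : smaller elements of leaf-leaf pairs
  set B' : Finset (Fin n) := B.filter (fun v => v < N v) with hB'def
  have hBmem : ∀ v ∈ B, v ∈ L ∧ N v ∈ L ∧ G.Adj v (N v) ∧ N (N v) = v ∧ N v ∈ B := by
    intro v hv
    rw [hBdef, Finset.mem_filter] at hv
    obtain ⟨hvL, hNvL⟩ := hv
    have hadj := (hNadj v hvL).1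
    have hNN : N (N v) = v := ((hNadj (N v) hNvL).2 v hadj.symm).symm
    refine ⟨hvL, hNvL, hadj, hNN, ?_⟩
    rw [hBdef, Finset.mem_filter]
    exact ⟨hNvL, by rw [hNN]; exact hvL⟩
  have hB'2 : 2 * #B' ≤ #B := by
    set B'' : Finset (Fin n) := B.filter (fun v => N v < v) with hB''def
    have hinj : ∀ v ∈ B', N v ∈ B'' := by
      intro v hv
      rw [hB'def, Finset.mem_filter] at hv
      rw [hB''def, Finset.mem_filter]
      obtain ⟨hvB, hlt⟩ := hv
      obtain ⟨-, -, -, hNN, hNB⟩ := hBmem v hvB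
      exact ⟨hNB, by rw [hNN]; exact hlt⟩
    have hcard : #B' ≤ #B'' := by
      apply Finset.card_le_card_of_injOn N (fun v hv => hinj v hv)
      intro x hx y hy hxy
      simp only [Finset.mem_coe, hB'def, Finset.mem_filter] at hx hy
      have h1 := (hBmem x hx.1).2.2.2.1
      have h2 := (hBmem y hy.1).2.2.2.1
      rw [← h1, ← h2, hxy]
    have hdisj2 : Disjoint B' B'' := by
      rw [Finset.disjoint_left]
      intro v hv hv'
      rw [hB'def, Finset.mem_filter] at hv
      rw [hB''def, Finset.mem_filter] at hv'
      exact absurd hv.2 (not_lt.mpr (le_of_lt hv'.2))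
    have hsub : B' ∪ B'' ⊆ B := by
      intro v hv
      rcases Finset.mem_union.mp hv with hv | hv
      · exact (Finset.mem_filter.mp hv).1
      · exact (Finset.mem_filter.mp hv).1
    have := Finset.card_le_card hsub
    rw [Finset.card_union_of_disjoint hdisj2] at this
    omega
  -- the dominating set
  set D : Finset (Fin n) := I ∪ B' with hDdef
  have hdom : IsDomSet G (↑D : Set (Fin n)) := by
    intro v hv
    have hvI : v ∉ I := fun h => hv (Finset.mem_coe.mpr (Finset.mem_union_left _ h))
    have hvB' : v ∉ B' := fun h => hv (Finset.mem_coe.mpr (Finset.mem_union_right _ h))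
    have hvL : v ∈ L := by
      rcases hparts v with ⟨h, -⟩ | ⟨h, -⟩
      · exact absurd h hvI
      · exact h
    have hadj := (hNadj v hvL).1
    by_cases hN : N v ∈ I
    · exact ⟨N v, Finset.mem_coe.mpr (Finset.mem_union_left _ hN), hadj.symm⟩
    · have hNvL : N v ∈ L := by
        rcases hparts (N v) with ⟨h, -⟩ | ⟨h, -⟩
        · exact absurd h hN
        · exact h
      have hvB : v ∈ B := by rw [hBdef, Finset.mem_filter]; exact ⟨hvL, hNvL⟩
      obtain ⟨-, -, -, hNN, hNB⟩ := hBmem v hvB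
      have hne : N v ≠ v := hadj.ne'
      have hlt : N v < v := by
        rcases lt_or_gt_of_ne hne with h | h
        · exact h
        · exact absurd (show v ∈ B' from Finset.mem_filter.mpr ⟨hvB, h⟩) hvB'
      have hNB' : N v ∈ B' := by
        rw [hB'def, Finset.mem_filter]
        exact ⟨hNB, by rw [hNN]; exact hlt⟩
      exact ⟨N v, Finset.mem_coe.mpr (Finset.mem_union_right _ hNB'), hadj.symm⟩
  have hDcard : (↑D : Set (Fin n)).ncard ≤ m + c - 1 := by
    rw [Set.ncard_coe_finset]
    have h1 : #D ≤ #I + #B' := Finset.card_union_le I B'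
    omega
  calc domNum G ≤ (↑D : Set (Fin n)).ncard := Nat.sInf_le ⟨↑D, hdom, rfl⟩
    _ ≤ m + c - 1 := hDcard

end PartA

section PartB

lemma inv_spec {f : ℕ → ℕ} (hf : Monotone f) (h0 : f 0 = 0) {x N : ℕ} (hx : x < f N) :
    f (sInf {j | x < f (j+1)}) ≤ x ∧ x < f (sInf {j | x < f (j+1)} + 1) := by
  have hne : {j | x < f (j+1)}.Nonempty := ⟨N, lt_of_lt_of_le hx (hf (Nat.le_succ N))⟩
  have hmem := Nat.sInf_mem hne
  refine ⟨?_, hmem⟩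
  rcases Nat.eq_zero_or_pos (sInf {j | x < f (j+1)}) with h | h
  · rw [h, h0]; omega
  · have hlt : sInf {j | x < f (j+1)} - 1 < sInf {j | x < f (j+1)} := by omega
    have hnm := Nat.notMem_of_lt_sInf hlt
    simp only [Set.mem_setOf_eq, not_lt] at hnm
    have heq : sInf {j | x < f (j+1)} - 1 + 1 = sInf {j | x < f (j+1)} := by omega
    rwa [heq] at hnm

lemma inv_eq {f : ℕ → ℕ} (hf : Monotone f) {x i : ℕ} (h1 : f i ≤ x) (h2 : x < f (i+1)) :
    sInf {j | x < f (j+1)} = i := by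
  have hne : {j | x < f (j+1)}.Nonempty := ⟨i, h2⟩
  have hmem := Nat.sInf_mem hne
  apply le_antisymm (Nat.sInf_le (show i ∈ {j | x < f (j+1)} from h2))
  by_contra hcon
  push_neg at hcon
  have h3 : f (sInf {j | x < f (j+1)} + 1) ≤ f i := hf hcon
  simp only [Set.mem_setOf_eq] at hmem
  omega

def capf (D : ℕ → ℕ) : ℕ → ℕ := fun t => if t = 0 then D 0 - 1 else D t - 2
def Cf (D : ℕ → ℕ) (i : ℕ) : ℕ := ∑ t ∈ Finset.range i, capf D t
def Af (D : ℕ → ℕ) (m i : ℕ) : ℕ := min (Cf D i) (m - 1)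
def ef (D : ℕ → ℕ) (m i : ℕ) : ℕ := Af D m (i+1) - Af D m i
def lf (D : ℕ → ℕ) (m i : ℕ) : ℕ := D i - ef D m i - (if i = 0 then 0 else 1)
def Lcf (D : ℕ → ℕ) (m i : ℕ) : ℕ := ∑ t ∈ Finset.range i, lf D m t
noncomputable def qf (D : ℕ → ℕ) (m x : ℕ) : ℕ := sInf {j | x - 1 < Af D m (j+1)}
noncomputable def rf (D : ℕ → ℕ) (m x : ℕ) : ℕ := sInf {j | x - m < Lcf D m (j+1)}
noncomputable def parf (D : ℕ → ℕ) (m T x : ℕ) : ℕ :=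
  if x < m then qf D m x else if x < T then rf D m x else x - 1
def rootf (T x : ℕ) : Prop := x = 0 ∨ (T ≤ x ∧ (x - T) % 2 = 0)
def chld (D : ℕ → ℕ) (m T p x : ℕ) : Prop := ¬ rootf T x ∧ parf D m T x = p

noncomputable def G0 (n : ℕ) (D : ℕ → ℕ) (m T : ℕ) : SimpleGraph (Fin n) where
  Adj a b := (↑a : ℕ) ≠ ↑b ∧ (chld D m T ↑a ↑b ∨ chld D m T ↑b ↑a)
  symm := by
    constructor
    intro a b ⟨h1, h2⟩
    exact ⟨h1.symm, h2.symm⟩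
  loopless := by constructor; intro a ⟨h1, h2⟩; exact h1 rfl

variable {D : ℕ → ℕ} {m T k n : ℕ}

lemma Cf_mono : Monotone (Cf D) := by
  intro i j hij
  exact Finset.sum_le_sum_of_subset (Finset.range_subset_range.mpr hij)

lemma Af_mono : Monotone (Af D m) := fun i j hij => min_le_min (Cf_mono hij) le_rfl

lemma Af_zero : Af D m 0 = 0 := by simp [Af, Cf]

lemma Af_le : ∀ i, Af D m i ≤ m - 1 := fun i => min_le_right _ _

lemma Cf_succ (i : ℕ) : Cf D (i+1) = Cf D i + capf D i := Finset.sum_range_succ _ _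

lemma ef_le_capf (i : ℕ) : ef D m i ≤ capf D i := by
  have h1 := Cf_succ (D := D) i
  simp only [ef, Af]
  omega

section WithHyps

variable (hm : 1 ≤ m) (hT : 2 * m < T)
  (hanti : ∀ s t : ℕ, s ≤ t → t < m → D t ≤ D s)
  (hD2 : ∀ t, t < m → 2 ≤ D t) (hD1 : ∀ t, m ≤ t → D t = 1)
  (hSm : (∑ t ∈ Finset.range m, D t) + 2 = T + m)

include hm hD2 in
lemma Cf_total : Cf D m + 2 * m = (∑ t ∈ Finset.range m, D t) + 1 := by
  have h1 : ∀ t ∈ Finset.range m, capf D t + (if t = 0 then 1 else 2) = D t := by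
    intro t ht
    rw [Finset.mem_range] at ht
    have := hD2 t ht
    have h0 := hD2 0 (by omega)
    simp only [capf]
    by_cases h : t = 0
    · simp only [if_pos h]; subst h; omega
    · simp only [if_neg h]; omega
  have h2 : ∑ t ∈ Finset.range m, (capf D t + (if t = 0 then 1 else 2)) = ∑ t ∈ Finset.range m, D t :=
    Finset.sum_congr rfl h1
  rw [Finset.sum_add_distrib] at h2
  have h3 : ∀ M : ℕ, 1 ≤ M → ∑ t ∈ Finset.range M, (if t = 0 then (1:ℕ) else 2) = 2 * M - 1 := by
    intro M hM
    induction M with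
    | zero => omega
    | succ M ih =>
      rw [Finset.sum_range_succ]
      rcases Nat.eq_zero_or_pos M with h | h
      · subst h; simp
      · rw [ih h]; have : M ≠ 0 := by omega
        simp [this]; omega
  rw [h3 m hm] at h2
  have : 1 ≤ 2 * m := by omega
  simp only [Cf]
  omega

include hm hT hD2 hSm in
lemma Cf_m_eq : Cf D m + m + 1 = T := by
  have h := Cf_total (D := D) hm hD2
  have hbridge : (Finset.range m).sum D = ∑ t ∈ Finset.range m, D t := rfl
  omega

include hm hT hD2 hSm in
lemma Af_m : Af D m m = m - 1 := by
  have := Cf_m_eq (D := D) hm hT hD2 hSm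
  simp only [Af]
  omega

include hm hD2 hD1 in
lemma lf_spec : ∀ i, i < m → ef D m i + (if i = 0 then 0 else 1) + lf D m i = D i ∧ 1 ≤ lf D m i := by
  intro i hi
  have h1 := ef_le_capf (D := D) (m := m) i
  have h2 := hD2 i hi
  have h3 := hD2 0 (by omega)
  simp only [capf] at h1
  simp only [lf]
  split <;> rename_i h
  · rw [if_pos h] at h1
    subst h
    omega
  · rw [if_neg h] at h1
    omega

include hD1 in
lemma ef_add_lf_eq_one : ∀ i, m ≤ i → 1 ≤ i → ef D m i = 0 ∧ lf D m i = 0 := by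
  intro i him hi1
  have h1 := ef_le_capf (D := D) (m := m) i
  have h2 := hD1 i him
  simp only [capf, if_neg (by omega : ¬ i = 0)] at h1
  have he : ef D m i = 0 := by omega
  refine ⟨he, ?_⟩
  simp only [lf, if_neg (by omega : ¬ i = 0), he, h2]

lemma sum_ef (i : ℕ) : ∑ t ∈ Finset.range i, ef D m t = Af D m i := by
  induction i with
  | zero => simp [Af_zero]
  | succ i ih =>
    rw [Finset.sum_range_succ, ih]
    have h1 : Af D m i ≤ Af D m (i+1) := Af_mono (Nat.le_succ i)
    simp only [ef]
    omega

lemma Lcf_mono : Monotone (Lcf D m) := by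
  intro i j hij
  exact Finset.sum_le_sum_of_subset (Finset.range_subset_range.mpr hij)

include hm hT hD2 hD1 hSm in
lemma Lcf_m : Lcf D m m + m = T := by
  have h1 : ∀ t ∈ Finset.range m, ef D m t + (if t = 0 then 0 else 1) + lf D m t = D t := by
    intro t ht
    exact (lf_spec hm hD2 hD1 t (Finset.mem_range.mp ht)).1
  have h2 := Finset.sum_congr rfl h1
  rw [Finset.sum_add_distrib, Finset.sum_add_distrib, sum_ef, Af_m hm hT hD2 hSm] at h2
  have h3 : ∀ M : ℕ, ∑ t ∈ Finset.range M, (if t = 0 then (0:ℕ) else 1) = M - 1 := by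
    intro M
    induction M with
    | zero => simp
    | succ M ih =>
      rw [Finset.sum_range_succ, ih]
      rcases Nat.eq_zero_or_pos M with h | h
      · subst h; simp
      · have : M ≠ 0 := by omega
        simp [this]; omega
  rw [h3 m] at h2
  simp only [Lcf]
  have hb1 : (Finset.range m).sum D = ∑ t ∈ Finset.range m, D t := rfl
  have hb2 : (Finset.range m).sum (lf D m) = ∑ t ∈ Finset.range m, lf D m t := rfl
  omega

include hm hD1 in
lemma Lcf_flat : ∀ j, m ≤ j → Lcf D m j = Lcf D m m := by
  intro j hj
  simp only [Lcf]
  symm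
  apply Finset.sum_subset (Finset.range_subset_range.mpr hj)
  intro x _ hx
  rw [Finset.mem_range, not_lt] at hx
  exact (ef_add_lf_eq_one hD1 x hx (by omega)).2

include hm hT hD2 hD1 hSm in
lemma Lcf_le_all : ∀ j, Lcf D m j + m ≤ T := by
  intro j
  have hLm := Lcf_m hm hT hD2 hD1 hSm
  rcases le_or_gt j m with h | h
  · have := Lcf_mono (D := D) (m := m) h
    omega
  · rw [Lcf_flat hm hD1 j (by omega)]
    omega

end WithHyps

end PartB

section PartB2

variable {D : ℕ → ℕ} {m T k n : ℕ}
variable (hm : 1 ≤ m) (hT : 2 * m < T)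
  (hanti : ∀ s t : ℕ, s ≤ t → t < m → D t ≤ D s)
  (hD2 : ∀ t, t < m → 2 ≤ D t) (hD1 : ∀ t, m ≤ t → D t = 1)
  (hSm : (∑ t ∈ Finset.range m, D t) + 2 = T + m)

include hm hT hD2 hSm in
lemma qf_spec {x : ℕ} (hx1 : 1 ≤ x) (hxm : x < m) :
    Af D m (qf D m x) ≤ x - 1 ∧ x - 1 < Af D m (qf D m x + 1) := by
  have hAm := Af_m hm hT hD2 hSm
  exact inv_spec Af_mono Af_zero (N := m) (by omega)

lemma qf_eq {x i : ℕ} (h1 : Af D m i ≤ x - 1) (h2 : x - 1 < Af D m (i+1)) :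
    qf D m x = i := inv_eq Af_mono h1 h2

include hm hT hanti hD2 hD1 hSm in
lemma qf_lt {x : ℕ} (hx1 : 1 ≤ x) (hxm : x < m) : qf D m x < x ∧ qf D m x < m := by
  obtain ⟨i, hi⟩ : ∃ i, qf D m x = i := ⟨_, rfl⟩
  obtain ⟨h1, h2⟩ := qf_spec hm hT hD2 hSm hx1 hxm
  rw [hi] at h1 h2
  rw [hi]
  have hAlt : Af D m i < Af D m (i+1) := by omega
  have hA1 : Af D m (i+1) ≤ m - 1 := Af_le _
  have hCi : Af D m i = Cf D i := by
    simp only [Af] at hAlt hA1 ⊢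
    omega
  have hcap : 1 ≤ capf D i := by
    have hs := Cf_succ (D := D) i
    simp only [Af] at hAlt
    omega
  have him : i < m := by
    by_contra hcon
    push_neg at hcon
    have : i ≠ 0 := by omega
    simp only [capf, if_neg this, hD1 i hcon] at hcap
    omega
  have hcapall : ∀ t, t < i → 1 ≤ capf D t := by
    intro t ht
    by_cases h0 : t = 0
    · subst h0
      simp only [capf, reduceIte]
      have := hD2 0 (by omega)
      omega
    · simp only [capf, if_neg h0]
      have hti : D i ≤ D t := hanti t i (by omega) him
      have : i ≠ 0 := by omega
      simp only [capf, if_neg this] at hcap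
      omega
  have hCge : i ≤ Cf D i := by
    have : ∀ t ∈ Finset.range i, 1 ≤ capf D t := fun t ht => hcapall t (Finset.mem_range.mp ht)
    calc i = ∑ _t ∈ Finset.range i, 1 := by simp
    _ ≤ Cf D i := Finset.sum_le_sum this
  omega

include hm hT hD2 hSm in
lemma count_q (i : ℕ) :
    #((Finset.Ico 1 m).filter (fun x => qf D m x = i)) = ef D m i := by
  have hAm := Af_m hm hT hD2 hSm
  have hmono : Af D m i ≤ Af D m (i+1) := Af_mono (Nat.le_succ i)
  have hle : Af D m (i+1) ≤ m - 1 := Af_le _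
  have heq : (Finset.Ico 1 m).filter (fun x => qf D m x = i)
      = Finset.Ico (Af D m i + 1) (Af D m (i+1) + 1) := by
    ext x
    rw [Finset.mem_filter, Finset.mem_Ico, Finset.mem_Ico]
    constructor
    · rintro ⟨⟨hx1, hxm⟩, hq⟩
      obtain ⟨h1, h2⟩ := qf_spec hm hT hD2 hSm hx1 hxm
      rw [hq] at h1 h2
      omega
    · rintro ⟨h1, h2⟩
      have hx1 : 1 ≤ x := by omega
      have hxm : x < m := by omega
      exact ⟨⟨hx1, hxm⟩, qf_eq (by omega) (by omega)⟩
  rw [heq, Nat.card_Ico]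
  simp only [ef]
  omega

include hm hT hD2 hD1 hSm in
lemma rf_spec {x : ℕ} (hx1 : m ≤ x) (hxT : x < T) :
    Lcf D m (rf D m x) ≤ x - m ∧ x - m < Lcf D m (rf D m x + 1) := by
  have hLm := Lcf_m hm hT hD2 hD1 hSm
  exact inv_spec Lcf_mono (by simp [Lcf]) (N := m) (by omega)

lemma rf_eq {x i : ℕ} (h1 : Lcf D m i ≤ x - m) (h2 : x - m < Lcf D m (i+1)) :
    rf D m x = i := inv_eq Lcf_mono h1 h2

include hm hT hD2 hD1 hSm in
lemma rf_lt {x : ℕ} (hx1 : m ≤ x) (hxT : x < T) : rf D m x < m := by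
  obtain ⟨h1, h2⟩ := rf_spec hm hT hD2 hD1 hSm hx1 hxT
  have hLm := Lcf_m hm hT hD2 hD1 hSm
  by_contra hcon
  push_neg at hcon
  have := Lcf_mono (D := D) (m := m) hcon
  omega

include hm hT hD2 hD1 hSm in
lemma count_r (i : ℕ) :
    #((Finset.Ico m T).filter (fun x => rf D m x = i)) = lf D m i := by
  have hLm := Lcf_m hm hT hD2 hD1 hSm
  have hmono : Lcf D m i ≤ Lcf D m (i+1) := Lcf_mono (Nat.le_succ i)
  have hle : Lcf D m (i+1) + m ≤ T := Lcf_le_all hm hT hD2 hD1 hSm _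
  have heq : (Finset.Ico m T).filter (fun x => rf D m x = i)
      = Finset.Ico (m + Lcf D m i) (m + Lcf D m (i+1)) := by
    ext x
    rw [Finset.mem_filter, Finset.mem_Ico, Finset.mem_Ico]
    constructor
    · rintro ⟨⟨hx1, hxT⟩, hq⟩
      obtain ⟨h1, h2⟩ := rf_spec hm hT hD2 hD1 hSm hx1 hxT
      rw [hq] at h1 h2
      omega
    · rintro ⟨h1, h2⟩
      have hx1 : m ≤ x := by omega
      have hxT : x < T := by omega
      exact ⟨⟨hx1, hxT⟩, rf_eq (by omega) (by omega)⟩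
  rw [heq, Nat.card_Ico]
  have hLsucc : Lcf D m (i+1) = Lcf D m i + lf D m i := Finset.sum_range_succ _ _
  omega

include hm hT hD2 hD1 hSm in
lemma Lcf_diff (i : ℕ) (hi : i < m) : Lcf D m i + 1 ≤ Lcf D m (i + 1) := by
  have h := (lf_spec hm hD2 hD1 i hi).2
  have hLsucc : Lcf D m (i+1) = Lcf D m i + lf D m i := Finset.sum_range_succ _ _
  omega

include hm hT hanti hD2 hD1 hSm in
lemma parf_lt {x : ℕ} (hroot : ¬ rootf T x) : parf D m T x < x := by
  simp only [rootf, not_or, not_and] at hroot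
  obtain ⟨h0, hpar⟩ := hroot
  simp only [parf]
  split
  · exact (qf_lt hm hT hanti hD2 hD1 hSm (by omega) (by assumption)).1
  · split
    · rename_i h1 h2
      have := rf_lt hm hT hD2 hD1 hSm (by omega) h2
      omega
    · rename_i h1 h2
      omega

end PartB2

section PartB3

noncomputable instance decRootf (T x : ℕ) : Decidable (rootf T x) := by
  unfold rootf; infer_instance

noncomputable instance decChld (D : ℕ → ℕ) (m T p x : ℕ) : Decidable (chld D m T p x) := by
  unfold chld; infer_instance

variable {D : ℕ → ℕ} {m T k n : ℕ}
variable (hm : 1 ≤ m) (hT : 2 * m < T)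
  (hanti : ∀ s t : ℕ, s ≤ t → t < m → D t ≤ D s)
  (hD2 : ∀ t, t < m → 2 ≤ D t) (hD1 : ∀ t, m ≤ t → D t = 1)
  (hSm : (∑ t ∈ Finset.range m, D t) + 2 = T + m)
  (hnT : n = T + 2 * k)

include hm hT hanti hD2 hD1 hSm in
lemma parf_lt' {x : ℕ} (hroot : ¬ rootf T x) : parf D m T x < x :=
  parf_lt hm hT hanti hD2 hD1 hSm hroot

include hm hT hD2 hSm in
lemma Af_flat {j : ℕ} (hj : m ≤ j) : Af D m j = m - 1 := by
  have h1 := Cf_m_eq hm hT hD2 hSm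
  have h2 : Cf D m ≤ Cf D j := Cf_mono hj
  simp only [Af]
  omega

include hm hT hD2 hSm in
lemma ef_flat {j : ℕ} (hj : m ≤ j) : ef D m j = 0 := by
  simp only [ef, Af_flat hm hT hD2 hSm hj, Af_flat hm hT hD2 hSm (by omega : m ≤ j + 1)]
  omega

include hm hT hnT in
lemma children_eq (a : ℕ) :
    ((Finset.range n).filter (fun y => chld D m T a y))
      = (((Finset.Ico 1 m).filter (fun x => qf D m x = a)) ∪
        ((Finset.Ico m T).filter (fun x => rf D m x = a))) ∪
        ((Finset.Ico T n).filter (fun y => (y - T) % 2 = 1 ∧ y - 1 = a)) := by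
  have hmT : m < T := by omega
  have hTn : T ≤ n := by omega
  ext y
  simp only [Finset.mem_union, Finset.mem_filter, Finset.mem_range, Finset.mem_Ico]
  constructor
  · rintro ⟨hyn, hroot, hpar⟩
    simp only [rootf, not_or, not_and] at hroot
    obtain ⟨h0, hTpar⟩ := hroot
    by_cases h1 : y < m
    · left; left
      refine ⟨⟨by omega, h1⟩, ?_⟩
      rw [← hpar]
      simp only [parf, if_pos h1]
    · by_cases h2 : y < T
      · left; right
        refine ⟨⟨by omega, h2⟩, ?_⟩
        rw [← hpar]
        simp only [parf, if_neg h1, if_pos h2]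
      · right
        have hTy : T ≤ y := by omega
        refine ⟨⟨hTy, hyn⟩, ?_, ?_⟩
        · have := hTpar hTy
          omega
        · rw [← hpar]
          simp only [parf, if_neg h1, if_neg h2]
  · rintro ((⟨⟨hy1, hym⟩, hq⟩ | ⟨⟨hym, hyT⟩, hr⟩) | ⟨⟨hyT, hyn⟩, hodd, hy1⟩)
    · refine ⟨by omega, ?_, ?_⟩
      · simp only [rootf, not_or]
        constructor
        · omega
        · rintro ⟨h, -⟩; omega
      · simp only [parf, if_pos hym]; exact hq
    · refine ⟨by omega, ?_, ?_⟩
      · simp only [rootf, not_or]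
        constructor
        · omega
        · rintro ⟨h, -⟩; omega
      · simp only [parf, if_neg (by omega : ¬ y < m), if_pos hyT]; exact hr
    · refine ⟨by omega, ?_, ?_⟩
      · simp only [rootf, not_or]
        constructor
        · omega
        · rintro ⟨h, hmod⟩; omega
      · simp only [parf, if_neg (by omega : ¬ y < m), if_neg (by omega : ¬ y < T)]
        exact hy1

lemma count_k2 (a : ℕ) :
    #((Finset.Ico T n).filter (fun y => (y - T) % 2 = 1 ∧ y - 1 = a))
      = if T ≤ a + 1 ∧ a + 1 < n ∧ (a + 1 - T) % 2 = 1 then 1 else 0 := by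
  split
  · rename_i hcond
    rw [show ((Finset.Ico T n).filter (fun y => (y - T) % 2 = 1 ∧ y - 1 = a)) = {a + 1} from ?_]
    · exact Finset.card_singleton _
    · ext y
      simp only [Finset.mem_filter, Finset.mem_Ico, Finset.mem_singleton]
      constructor
      · rintro ⟨⟨h1, h2⟩, h3, h4⟩; omega
      · rintro rfl; refine ⟨⟨by omega, by omega⟩, by omega, by omega⟩
  · rename_i hcond
    rw [Finset.card_eq_zero, Finset.eq_empty_iff_forall_notMem]
    intro y hy
    simp only [Finset.mem_filter, Finset.mem_Ico] at hy
    apply hcond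
    obtain ⟨⟨h1, h2⟩, h3, h4⟩ := hy
    omega

include hm hT hD2 hD1 hSm hnT in
lemma card_children (a : ℕ) :
    #((Finset.range n).filter (fun y => chld D m T a y))
      = ef D m a + lf D m a + (if T ≤ a + 1 ∧ a + 1 < n ∧ (a + 1 - T) % 2 = 1 then 1 else 0) := by
  rw [children_eq hm hT hnT a]
  have hd1 : Disjoint ((Finset.Ico 1 m).filter (fun x => qf D m x = a))
      ((Finset.Ico m T).filter (fun x => rf D m x = a)) := by
    rw [Finset.disjoint_left]
    intro x hx hx'
    simp only [Finset.mem_filter, Finset.mem_Ico] at hx hx'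
    omega
  have hd2 : Disjoint (((Finset.Ico 1 m).filter (fun x => qf D m x = a)) ∪
      ((Finset.Ico m T).filter (fun x => rf D m x = a)))
      ((Finset.Ico T n).filter (fun y => (y - T) % 2 = 1 ∧ y - 1 = a)) := by
    rw [Finset.disjoint_left]
    intro x hx hx'
    simp only [Finset.mem_union, Finset.mem_filter, Finset.mem_Ico] at hx hx'
    rcases hx with hx | hx <;> omega
  rw [Finset.card_union_of_disjoint hd2, Finset.card_union_of_disjoint hd1,
    count_q hm hT hD2 hSm a, count_r hm hT hD2 hD1 hSm a, count_k2]

include hm hT hanti hD2 hD1 hSm in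
lemma card_parent_nonroot {a : ℕ} (ha : a < n) (hroot : ¬ rootf T a) :
    #((Finset.range n).filter (fun y => chld D m T y a)) = 1 := by
  have hlt := parf_lt' hm hT hanti hD2 hD1 hSm hroot
  rw [show ((Finset.range n).filter (fun y => chld D m T y a)) = {parf D m T a} from ?_]
  · exact Finset.card_singleton _
  · ext y
    rw [Finset.mem_filter, Finset.mem_range, Finset.mem_singleton]; simp only [chld]
    constructor
    · rintro ⟨-, -, h⟩; exact h.symm
    · rintro rfl; exact ⟨by omega, hroot, rfl⟩

lemma card_parent_root {a : ℕ} (hroot : rootf T a) :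
    #((Finset.range n).filter (fun y => chld D m T y a)) = 0 := by
  rw [Finset.card_eq_zero, Finset.eq_empty_iff_forall_notMem]
  intro y hy
  rw [Finset.mem_filter] at hy; simp only [chld] at hy
  exact hy.2.1 hroot

include hm hT hanti hD2 hD1 hSm in
lemma adj_G0 (a b : Fin n) :
    (G0 n D m T).Adj a b ↔ (chld D m T ↑a ↑b ∨ chld D m T ↑b ↑a) := by
  constructor
  · rintro ⟨-, h⟩; exact h
  · intro h
    refine ⟨?_, h⟩
    rcases h with h | h
    · have := parf_lt' hm hT hanti hD2 hD1 hSm h.1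
      rw [h.2] at this
      omega
    · have := parf_lt' hm hT hanti hD2 hD1 hSm h.1
      rw [h.2] at this
      omega

include hm hT hanti hD2 hD1 hSm hnT in
lemma deg_G0 (a : Fin n) : deg (G0 n D m T) a = D ↑a := by
  classical
  rw [deg_eq_card_filter]
  have hstep : Finset.univ.filter (fun b => (G0 n D m T).Adj a b)
      = Finset.univ.filter (fun b : Fin n => (chld D m T ↑a ↑b ∨ chld D m T ↑b ↑a)) := by
    apply Finset.filter_congr
    intro b _
    exact adj_G0 hm hT hanti hD2 hD1 hSm a b
  rw [hstep, card_filter_val n (fun y => chld D m T ↑a y ∨ chld D m T y ↑a)]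
  have hsplit : ((Finset.range n).filter (fun y => chld D m T ↑a y ∨ chld D m T y ↑a))
      = ((Finset.range n).filter (fun y => chld D m T ↑a y)) ∪
        ((Finset.range n).filter (fun y => chld D m T y ↑a)) := Finset.filter_or _ _ _
  have hdisj : Disjoint ((Finset.range n).filter (fun y => chld D m T ↑a y))
      ((Finset.range n).filter (fun y => chld D m T y ↑a)) := by
    rw [Finset.disjoint_left]
    intro y hy hy'
    simp only [Finset.mem_filter] at hy hy'
    have l1 := parf_lt' hm hT hanti hD2 hD1 hSm hy.2.1
    have l2 := parf_lt' hm hT hanti hD2 hD1 hSm hy'.2.1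
    rw [hy.2.2] at l1
    rw [hy'.2.2] at l2
    omega
  rw [hsplit, Finset.card_union_of_disjoint hdisj,
    card_children hm hT hD2 hD1 hSm hnT]
  have ha : (a : ℕ) < n := a.isLt
  -- case analysis on the position of a
  by_cases h0 : (a : ℕ) = 0
  · rw [card_parent_root (by left; exact h0)]
    obtain ⟨hsum0, -⟩ := lf_spec hm hD2 hD1 0 (by omega)
    rw [h0]
    have hcond : ¬ (T ≤ 0 + 1 ∧ 0 + 1 < n ∧ (0 + 1 - T) % 2 = 1) := by
      rintro ⟨h, -⟩; omega
    rw [if_neg hcond]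
    simp only [reduceIte] at hsum0
    omega
  · by_cases h1 : (a : ℕ) < m
    · rw [card_parent_nonroot hm hT hanti hD2 hD1 hSm ha
        (by simp only [rootf, not_or]; exact ⟨h0, by rintro ⟨h, -⟩; omega⟩)]
      obtain ⟨hsuma, -⟩ := lf_spec hm hD2 hD1 ↑a h1
      have hcond : ¬ (T ≤ ↑a + 1 ∧ ↑a + 1 < n ∧ (↑a + 1 - T) % 2 = 1) := by
        rintro ⟨h, -⟩; omega
      rw [if_neg hcond]
      rw [if_neg h0] at hsuma
      omega
    · have hef := ef_flat hm hT hD2 hSm (by omega : m ≤ (a:ℕ))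
      have hlf := (ef_add_lf_eq_one hD1 ↑a (by omega) (by omega)).2
      have hDa := hD1 ↑a (by omega)
      by_cases h2 : (a : ℕ) < T
      · rw [card_parent_nonroot hm hT hanti hD2 hD1 hSm ha
          (by simp only [rootf, not_or]; exact ⟨h0, by rintro ⟨h, -⟩; omega⟩)]
        have hcond : ¬ (T ≤ ↑a + 1 ∧ ↑a + 1 < n ∧ (↑a + 1 - T) % 2 = 1) := by
          rintro ⟨hc1, hc2, hc3⟩
          have : (a : ℕ) = T - 1 := by omega
          omega
        rw [if_neg hcond]
        omega
      · by_cases h3 : ((a : ℕ) - T) % 2 = 0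
        · rw [card_parent_root (by right; exact ⟨by omega, h3⟩)]
          have hcond : (T ≤ ↑a + 1 ∧ ↑a + 1 < n ∧ (↑a + 1 - T) % 2 = 1) := by
            refine ⟨by omega, by omega, by omega⟩
          rw [if_pos hcond]
          omega
        · rw [card_parent_nonroot hm hT hanti hD2 hD1 hSm ha
            (by simp only [rootf, not_or]; exact ⟨h0, by rintro ⟨-, h⟩; omega⟩)]
          have hcond : ¬ (T ≤ ↑a + 1 ∧ ↑a + 1 < n ∧ (↑a + 1 - T) % 2 = 1) := by
            rintro ⟨hc1, hc2, hc3⟩; omega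
          rw [if_neg hcond]
          omega

include hm hT hanti hD2 hD1 hSm in
lemma G0_acyclic : (G0 n D m T).IsAcyclic := by
  apply acyclic_of_unique_smaller
  intro v u w h1 h2 hu hw
  rw [Fin.lt_def] at hu hw
  have c1 : chld D m T ↑u ↑v := by
    rcases h1.2 with h | h
    · have := parf_lt' hm hT hanti hD2 hD1 hSm h.1
      rw [h.2] at this; omega
    · exact h
  have c2 : chld D m T ↑w ↑v := by
    rcases h2.2 with h | h
    · have := parf_lt' hm hT hanti hD2 hD1 hSm h.1
      rw [h.2] at this; omega
    · exact h
  apply Fin.val_injective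
  rw [← c1.2, ← c2.2]

end PartB3

section PartB4

variable {D : ℕ → ℕ} {m T k n : ℕ}
variable (hm : 1 ≤ m) (hT : 2 * m < T)
  (hanti : ∀ s t : ℕ, s ≤ t → t < m → D t ≤ D s)
  (hD2 : ∀ t, t < m → 2 ≤ D t) (hD1 : ∀ t, m ≤ t → D t = 1)
  (hSm : (∑ t ∈ Finset.range m, D t) + 2 = T + m)
  (hnT : n = T + 2 * k)

include hm hT hanti hD2 hD1 hSm in
lemma leaf_nbr {x u : Fin n} (hx : m ≤ ↑x) (hxT : ↑x < T)
    (hadj : (G0 n D m T).Adj u x) : (u : ℕ) = rf D m ↑x := by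
  rcases (adj_G0 hm hT hanti hD2 hD1 hSm u x).mp hadj with h | h
  · -- x is a child of u
    rw [← h.2]
    simp only [parf, if_neg (by omega : ¬ (x:ℕ) < m), if_pos hxT]
  · -- u is a child of x : impossible
    exfalso
    obtain ⟨hroot, hpar⟩ := h
    simp only [rootf, not_or, not_and] at hroot
    by_cases h1 : (u:ℕ) < m
    · have h0 : (u:ℕ) ≠ 0 := hroot.1
      have := (qf_lt hm hT hanti hD2 hD1 hSm (by omega) h1).2
      simp only [parf, if_pos h1] at hpar
      omega
    · by_cases h2 : (u:ℕ) < T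
      · have := rf_lt hm hT hD2 hD1 hSm (by omega) h2
        simp only [parf, if_neg h1, if_pos h2] at hpar
        omega
      · simp only [parf, if_neg h1, if_neg h2] at hpar
        have hu : (u:ℕ) = ↑x + 1 := by omega
        have := hroot.2 (by omega)
        omega

include hm hT hanti hD2 hD1 hSm in
lemma k2_nbr {x u : Fin n} (hx : T ≤ ↑x) (hodd : ((x:ℕ) - T) % 2 = 1)
    (hadj : (G0 n D m T).Adj u x) : (u : ℕ) = ↑x - 1 := by
  rcases (adj_G0 hm hT hanti hD2 hD1 hSm u x).mp hadj with h | h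
  · rw [← h.2]
    simp only [parf, if_neg (by omega : ¬ (x:ℕ) < m), if_neg (by omega : ¬ (x:ℕ) < T)]
  · exfalso
    obtain ⟨hroot, hpar⟩ := h
    simp only [rootf, not_or, not_and] at hroot
    by_cases h1 : (u:ℕ) < m
    · have h0 : (u:ℕ) ≠ 0 := hroot.1
      have := (qf_lt hm hT hanti hD2 hD1 hSm (by omega) h1).2
      simp only [parf, if_pos h1] at hpar
      omega
    · by_cases h2 : (u:ℕ) < T
      · have := rf_lt hm hT hD2 hD1 hSm (by omega) h2
        simp only [parf, if_neg h1, if_pos h2] at hpar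
        omega
      · simp only [parf, if_neg h1, if_neg h2] at hpar
        have hu : (u:ℕ) = ↑x + 1 := by omega
        have := hroot.2 (by omega)
        omega

include hm hT hanti hD2 hD1 hSm hnT in
lemma dom_upper : IsDomSet (G0 n D m T)
    {v : Fin n | ↑v < m ∨ (T ≤ ↑v ∧ ((v:ℕ) - T) % 2 = 0)} := by
  intro v hv
  simp only [Set.mem_setOf_eq, not_or, not_and] at hv
  obtain ⟨h1, h2⟩ := hv
  by_cases hvT : (v:ℕ) < T
  · -- v is a tree leaf
    have hrf := rf_lt hm hT hD2 hD1 hSm (by omega) hvT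
    refine ⟨⟨rf D m ↑v, by omega⟩, Or.inl (by simpa using hrf), ?_⟩
    rw [adj_G0 hm hT hanti hD2 hD1 hSm]
    left
    constructor
    · simp only [rootf, not_or, not_and]
      exact ⟨by omega, fun h => by omega⟩
    · simp only [parf, if_neg (by omega : ¬ (v:ℕ) < m), if_pos hvT]
  · -- v is the odd vertex of a K2
    have hodd : ((v:ℕ) - T) % 2 = 1 := by
      have := h2 (by omega)
      omega
    refine ⟨⟨(v:ℕ) - 1, by omega⟩, Or.inr ⟨by simp; omega, by simp; omega⟩, ?_⟩
    rw [adj_G0 hm hT hanti hD2 hD1 hSm]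
    left
    constructor
    · simp only [rootf, not_or, not_and]
      exact ⟨by omega, fun h => by omega⟩
    · simp only [parf, if_neg (by omega : ¬ (v:ℕ) < m), if_neg (by omega : ¬ (v:ℕ) < T)]

include hm hT hnT in
lemma dom_upper_card :
    ({v : Fin n | ↑v < m ∨ (T ≤ ↑v ∧ ((v:ℕ) - T) % 2 = 0)} : Set (Fin n)).ncard = m + k := by
  classical
  have heq : ({v : Fin n | ↑v < m ∨ (T ≤ ↑v ∧ ((v:ℕ) - T) % 2 = 0)} : Set (Fin n))
      = ↑(Finset.univ.filter (fun v : Fin n => (v:ℕ) < m ∨ (T ≤ ↑v ∧ ((v:ℕ) - T) % 2 = 0))) := by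
    ext v; simp
  rw [heq, Set.ncard_coe_finset,
    card_filter_val n (fun y => y < m ∨ (T ≤ y ∧ (y - T) % 2 = 0))]
  have hsplit : (Finset.range n).filter (fun y => y < m ∨ (T ≤ y ∧ (y - T) % 2 = 0))
      = ((Finset.range n).filter (fun y => y < m)) ∪
        ((Finset.range n).filter (fun y => T ≤ y ∧ (y - T) % 2 = 0)) := Finset.filter_or _ _ _
  have hdisj : Disjoint ((Finset.range n).filter (fun y => y < m))
      ((Finset.range n).filter (fun y => T ≤ y ∧ (y - T) % 2 = 0)) := by
    rw [Finset.disjoint_left]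
    intro y hy hy'
    simp only [Finset.mem_filter] at hy hy'
    omega
  rw [hsplit, Finset.card_union_of_disjoint hdisj]
  have hc1 : (Finset.range n).filter (fun y => y < m) = Finset.range m := by
    ext y
    simp only [Finset.mem_filter, Finset.mem_range]
    omega
  have hc2 : (Finset.range n).filter (fun y => T ≤ y ∧ (y - T) % 2 = 0)
      = (Finset.range k).image (fun t => T + 2 * t) := by
    ext y
    simp only [Finset.mem_filter, Finset.mem_range, Finset.mem_image]
    constructor
    · rintro ⟨h1, h2, h3⟩
      exact ⟨(y - T) / 2, by omega, by omega⟩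
    · rintro ⟨t, ht, rfl⟩
      omega
  rw [hc1, hc2, Finset.card_range,
    Finset.card_image_of_injective _ (fun a b hab => by omega), Finset.card_range]

include hm hT hanti hD2 hD1 hSm hnT in
lemma dom_lower (Dset : Set (Fin n)) (hdom : IsDomSet (G0 n D m T) Dset) :
    m + k ≤ Dset.ncard := by
  classical
  rw [Set.ncard_eq_toFinset_card' Dset]
  have hrange : m + k = #(Finset.range (m + k)) := (Finset.card_range _).symm
  rw [hrange]
  apply Finset.card_le_card_of_surjOn
    (fun v : Fin n => if (v:ℕ) < m then (v:ℕ) else if (v:ℕ) < T then rf D m ↑v else m + ((v:ℕ) - T) / 2)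
  intro j hj
  simp only [Finset.coe_range, Set.mem_Iio] at hj
  by_cases hjm : j < m
  · -- the pair {j, first leaf of j}
    have hLj : Lcf D m j + 1 ≤ Lcf D m (j+1) := Lcf_diff hm hT hD2 hD1 hSm j hjm
    have hLjm : Lcf D m (j+1) + m ≤ T := Lcf_le_all hm hT hD2 hD1 hSm _
    have haj : m + Lcf D m j < n := by omega
    obtain ⟨aj, hav⟩ : ∃ aj : Fin n, (aj : ℕ) = m + Lcf D m j := ⟨⟨m + Lcf D m j, haj⟩, rfl⟩
    have hrfaj : rf D m ↑aj = j := by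
      rw [hav]; exact rf_eq (by omega) (by omega)
    by_cases hin : aj ∈ Dset
    · refine ⟨aj, by simpa using hin, ?_⟩
      dsimp only
      rw [if_neg (by rw [hav]; omega), if_pos (by rw [hav]; omega)]
      exact hrfaj
    · obtain ⟨u, hu, hadj⟩ := hdom aj hin
      have huval : (u:ℕ) = rf D m ↑aj :=
        leaf_nbr hm hT hanti hD2 hD1 hSm (by rw [hav]; omega) (by rw [hav]; omega) hadj
      rw [hrfaj] at huval
      refine ⟨u, by simpa using hu, ?_⟩
      dsimp only
      rw [if_pos (by omega)]
      exact huval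
  · -- the K2 pair
    have haj : T + 2 * (j - m) + 1 < n := by omega
    obtain ⟨aj, hav⟩ : ∃ aj : Fin n, (aj : ℕ) = T + 2 * (j - m) + 1 := ⟨⟨T + 2 * (j - m) + 1, haj⟩, rfl⟩
    by_cases hin : aj ∈ Dset
    · refine ⟨aj, by simpa using hin, ?_⟩
      dsimp only
      rw [if_neg (by rw [hav]; omega), if_neg (by rw [hav]; omega), hav]
      omega
    · obtain ⟨u, hu, hadj⟩ := hdom aj hin
      have huval : (u:ℕ) = ↑aj - 1 :=
        k2_nbr hm hT hanti hD2 hD1 hSm (by rw [hav]; omega) (by rw [hav]; omega) hadj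
      rw [hav] at huval
      refine ⟨u, by simpa using hu, ?_⟩
      dsimp only
      rw [if_neg (by omega), if_neg (by omega)]
      omega

include hm hT hanti hD2 hD1 hSm hnT in
lemma partB : ∃ G : SimpleGraph (Fin n), G.IsAcyclic ∧ (∀ v : Fin n, deg G v = D ↑v)
    ∧ domNum G = m + k := by
  refine ⟨G0 n D m T, G0_acyclic hm hT hanti hD2 hD1 hSm,
    fun v => deg_G0 hm hT hanti hD2 hD1 hSm hnT v, ?_⟩
  have hmem : (m + k) ∈ {j | ∃ Dset : Set (Fin n), IsDomSet (G0 n D m T) Dset ∧ Dset.ncard = j} :=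
    ⟨_, dom_upper hm hT hanti hD2 hD1 hSm hnT, dom_upper_card hm hT hnT⟩
  apply le_antisymm (Nat.sInf_le hmem)
  apply le_csInf ⟨_, hmem⟩
  rintro b ⟨Dset, hdom, rfl⟩
  exact dom_lower hm hT hanti hD2 hD1 hSm hnT Dset hdom

end PartB4

section MainGlue

lemma countP_univ_eq {α : Type*} [Fintype α] (p : α → Prop) [DecidablePred p] :
    Multiset.countP p Finset.univ.val = #(Finset.univ.filter p) := by
  rw [Multiset.countP_eq_card_filter]
  rfl

lemma card_lt_val {n z : ℕ} (hz : z ≤ n) :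
    #(Finset.univ.filter (fun j : Fin n => (j:ℕ) < z)) = z := by
  rw [card_filter_val n (fun y => y < z)]
  rw [show (Finset.range n).filter (fun y => y < z) = Finset.range z from by
    ext y; simp only [Finset.mem_filter, Finset.mem_range]; omega]
  exact Finset.card_range z

lemma card_le_val {n z : ℕ} (hz : z < n) :
    #(Finset.univ.filter (fun j : Fin n => (j:ℕ) ≤ z)) = z + 1 := by
  rw [card_filter_val n (fun y => y ≤ z)]
  rw [show (Finset.range n).filter (fun y => y ≤ z) = Finset.range (z+1) from by
    ext y; simp only [Finset.mem_filter, Finset.mem_range]; omega]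
  exact Finset.card_range _

theorem stmt_9' (n c : ℕ) (hc : 0 < c) (d : Fin n → ℕ) (hmono : Antitone d)
    (hpos : ∀ i, 0 < d i) (hsum : ∑ i, d i = 2 * n - 2 * c)
    (hd1 : ∀ i : Fin n, (i : ℕ) = 0 → 2 ≤ d i)
    (h12 : (Finset.univ.filter fun i => 2 ≤ d i).card < (Finset.univ.filter fun i => d i = 1).card)
    (hcs : c - 1 < ((Finset.univ.filter fun i => d i = 1).card - (Finset.univ.filter fun i => 2 ≤ d i).card) ⌈/⌉ 2) :
    IsGreatest {k | ∃ G : SimpleGraph (Fin n), G.IsAcyclic ∧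
        degSeq G = Finset.univ.val.map d ∧ domNum G = k}
      (n - (Finset.univ.filter fun i => d i = 1).card + c - 1) := by
  classical
  set m := #(Finset.univ.filter fun i => 2 ≤ d i) with hmdef
  set n1 := #(Finset.univ.filter fun i => d i = 1) with hn1def
  -- basic facts
  have hn1pos : 0 < n := by
    have hle : n1 ≤ n := by
      rw [hn1def]
      simpa using Finset.card_filter_le Finset.univ (fun i : Fin n => d i = 1)
    omega
  have hmn : m + n1 = n := by
    have hcongr : Finset.univ.filter (fun i : Fin n => d i = 1)
        = Finset.univ.filter (fun i => ¬ 2 ≤ d i) := by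
      apply Finset.filter_congr
      intro i _
      have := hpos i
      constructor <;> intro h <;> omega
    rw [hn1def, hcongr]
    rw [hmdef]
    rw [Finset.card_filter_add_card_filter_not]
    simp
  have hseg : ∀ i : Fin n, ((i:ℕ) < m ↔ 2 ≤ d i) := by
    intro i
    constructor
    · intro him
      by_contra hcon
      have hsub : Finset.univ.filter (fun j : Fin n => 2 ≤ d j)
          ⊆ Finset.univ.filter (fun j : Fin n => (j:ℕ) < (i:ℕ)) := by
        intro j hj
        simp only [Finset.mem_filter, Finset.mem_univ, true_and] at hj ⊢
        by_contra hji
        push_neg at hji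
        have : d j ≤ d i := hmono (by rw [Fin.le_def]; omega)
        omega
      have := Finset.card_le_card hsub
      rw [card_lt_val (by omega : (i:ℕ) ≤ n)] at this
      rw [← hmdef] at this
      omega
    · intro hdi
      have hsub : Finset.univ.filter (fun j : Fin n => (j:ℕ) ≤ (i:ℕ))
          ⊆ Finset.univ.filter (fun j : Fin n => 2 ≤ d j) := by
        intro j hj
        simp only [Finset.mem_filter, Finset.mem_univ, true_and] at hj ⊢
        have : d i ≤ d j := hmono (by rw [Fin.le_def]; omega)
        omega
      have := Finset.card_le_card hsub
      rw [card_le_val i.isLt] at this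
      rw [← hmdef] at this
      omega
  have hm1 : 1 ≤ m := by
    have h0 := hd1 ⟨0, hn1pos⟩ rfl
    have := (hseg ⟨0, hn1pos⟩).mpr h0
    simp at this; omega
  have hKI : m + 2 * c ≤ n1 + 1 := by
    rw [Nat.ceilDiv_eq_add_pred_div] at hcs
    omega
  have hsumtot : (∑ i, d i) + 2 * c = 2 * n := by
    have hge : n ≤ ∑ i, d i := by
      calc n = ∑ _i : Fin n, 1 := by simp
      _ ≤ ∑ i, d i := Finset.sum_le_sum (fun i _ => hpos i)
    omega
  -- set up part B parameters
  set km := c - 1 with hkm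
  set T := n - 2 * km with hTdef
  have hnT : n = T + 2 * km := by omega
  have hT2m : 2 * m < T := by omega
  set DD : ℕ → ℕ := fun t => if h : t < n then d ⟨t, h⟩ else 1 with hDDdef
  have hDDeq : ∀ i : Fin n, DD ↑i = d i := by
    intro i
    simp only [hDDdef, i.isLt, dif_pos, Fin.eta]
  have hD2' : ∀ t, t < m → 2 ≤ DD t := by
    intro t ht
    have htn : t < n := by omega
    simp only [hDDdef, dif_pos htn]
    exact (hseg ⟨t, htn⟩).mp (by simpa using ht)
  have hD1' : ∀ t, m ≤ t → DD t = 1 := by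
    intro t ht
    simp only [hDDdef]
    split
    · rename_i h
      have h2 := (hseg ⟨t, h⟩).not
      simp only [not_lt, not_le] at h2
      have := h2.mp (by simpa using ht)
      have := hpos ⟨t, h⟩
      omega
    · rfl
  have hanti' : ∀ s t : ℕ, s ≤ t → t < m → DD t ≤ DD s := by
    intro s t hst ht
    have htn : t < n := by omega
    have hsn : s < n := by omega
    simp only [hDDdef, dif_pos htn, dif_pos hsn]
    exact hmono (by rw [Fin.le_def]; simpa using hst)
  have hSm' : (∑ t ∈ Finset.range m, DD t) + 2 = T + m := by
    have hA : ∑ t ∈ Finset.range n, DD t = ∑ i, d i := by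
      rw [← Fin.sum_univ_eq_sum_range]
      exact Finset.sum_congr rfl (fun i _ => hDDeq i)
    have hsplit : ∑ t ∈ Finset.range m, DD t + ∑ t ∈ Finset.Ico m n, DD t
        = ∑ t ∈ Finset.range n, DD t := by
      rw [Finset.range_eq_Ico, Finset.range_eq_Ico]
      exact Finset.sum_Ico_consecutive DD (by omega : 0 ≤ m) (by omega : m ≤ n)
    have hIco : ∑ t ∈ Finset.Ico m n, DD t = n - m := by
      calc ∑ t ∈ Finset.Ico m n, DD t = ∑ t ∈ Finset.Ico m n, 1 :=
            Finset.sum_congr rfl (fun t ht => hD1' t (Finset.mem_Ico.mp ht).1)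
      _ = n - m := by rw [Finset.sum_const, Nat.card_Ico, smul_eq_mul]; omega
    omega
  -- construct the extremal forest
  obtain ⟨G, hGac, hGdeg, hGdom⟩ :=
    partB (D := DD) (m := m) (T := T) (k := km) (n := n) hm1 hT2m hanti' hD2' hD1' hSm' hnT
  have hval : n - n1 + c - 1 = m + km := by omega
  constructor
  · -- membership
    refine ⟨G, hGac, ?_, ?_⟩
    · rw [degSeq]
      apply Multiset.map_congr rfl
      intro v _
      rw [hGdeg v, hDDeq v]
    · rw [hGdom, hval]
  · -- upper bound
    rintro x ⟨G', hac', hds', hdn'⟩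
    rw [← hdn', hval]
    have hpos' : ∀ v, 1 ≤ deg G' v := by
      intro v
      have hmem : deg G' v ∈ degSeq G' := by
        rw [degSeq]
        exact Multiset.mem_map_of_mem _ (Finset.mem_univ_val _)
      rw [hds', Multiset.mem_map] at hmem
      obtain ⟨i, -, hi⟩ := hmem
      rw [← hi]
      exact hpos i
    have hI' : #(Finset.univ.filter (fun v => 2 ≤ deg G' v)) = m := by
      have hc2 := congrArg (Multiset.countP (fun x => 2 ≤ x)) hds'
      rw [degSeq, Multiset.countP_map, Multiset.countP_map] at hc2
      have e1 : Multiset.card (Multiset.filter (fun a => 2 ≤ deg G' a) Finset.univ.val)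
          = #(Finset.univ.filter (fun v => 2 ≤ deg G' v)) := by
        rw [← Multiset.countP_eq_card_filter, countP_univ_eq]
      have e2 : Multiset.card (Multiset.filter (fun a => 2 ≤ d a) Finset.univ.val)
          = #(Finset.univ.filter (fun v => 2 ≤ d v)) := by
        rw [← Multiset.countP_eq_card_filter, countP_univ_eq]
      rw [e1, e2] at hc2
      rw [hc2, ← hmdef]
    have hsum' : (∑ v, deg G' v) + 2 * c = 2 * n := by
      have hc3 := congrArg Multiset.sum hds'
      rw [degSeq] at hc3
      have e1 : (Finset.univ.val.map (deg G')).sum = ∑ v, deg G' v := rfl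
      have e2 : (Finset.univ.val.map d).sum = ∑ i, d i := rfl
      rw [e1, e2] at hc3
      rw [hc3]
      exact hsumtot
    have := partA G' hac' (m := m) (n1 := n1) (c := c) (by omega) hm1 hmn hpos' hI' hsum'
    omega

end MainGlue


theorem stmt_9 (n c : ℕ) (hc : 0 < c) (d : Fin n → ℕ) (hmono : Antitone d)
    (hpos : ∀ i, 0 < d i) (hsum : ∑ i, d i = 2 * n - 2 * c)
    (hd1 : ∀ i : Fin n, (i : ℕ) = 0 → 2 ≤ d i)
    (h12 : (Finset.univ.filter fun i => 2 ≤ d i).card < (Finset.univ.filter fun i => d i = 1).card)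
    (hcs : c - 1 < ((Finset.univ.filter fun i => d i = 1).card - (Finset.univ.filter fun i => 2 ≤ d i).card) ⌈/⌉ 2) :
    IsGreatest {k | ∃ G : SimpleGraph (Fin n), G.IsAcyclic ∧
        degSeq G = Finset.univ.val.map d ∧ domNum G = k}
      (n - (Finset.univ.filter fun i => d i = 1).card + c - 1) := by
  exact stmt_9' n c hc d hmono hpos hsum hd1 h12 hcs
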